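/- Let K, φ, α, Q̄, Q_u > 0 with Q̄ ≤ Q_u, R* = (2K/α)^{1/3}, and K/R*² + αR* > φ. Define h₁(x) = (K/Q̄²)x³/(1−x)² − φx + α(1−x)Q̄ on [0, Q̄/(R*+Q̄)], h₂(x) = (K/Q_u²)x³/(1−x)² − φx + α(1−x)Q_u on [Q_u/(R*+Q_u), 1), and h₃(x) = (K/R*² − φ + αR*)x on [Q̄/(R*+Q̄), Q_u/(R*+Q_u)]. Then min h₁ ≤ min h₃ ≤ min h₂, where each minimum is over the stated domain. -/

import Mathlib

set_option maxHeartbeats 1000000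


theorem stmt17 (K φ α Qb Qu : ℝ) (hK : 0 < K) (hφ : 0 < φ) (hα : 0 < α)
    (hQb : 0 < Qb) (hQQ : Qb ≤ Qu)
    (Rs : ℝ) (hRs : Rs = (2 * K / α) ^ ((1:ℝ)/3))
    (hass : φ < K / Rs ^ 2 + α * Rs)
    (m1 m2 m3 : ℝ)
    (h1 : IsLeast ((fun x : ℝ => K / Qb ^ 2 * (x ^ 3 / (1 - x) ^ 2) - φ * x + α * (1 - x) * Qb) ''
      Set.Icc 0 (Qb / (Rs + Qb))) m1)
    (h3 : IsLeast ((fun x : ℝ => (K / Rs ^ 2 - φ + α * Rs) * x) ''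
      Set.Icc (Qb / (Rs + Qb)) (Qu / (Rs + Qu))) m3)
    (h2 : IsLeast ((fun x : ℝ => K / Qu ^ 2 * (x ^ 3 / (1 - x) ^ 2) - φ * x + α * (1 - x) * Qu) ''
      Set.Ico (Qu / (Rs + Qu)) 1) m2) :
    m1 ≤ m3 ∧ m3 ≤ m2 := by
  have hQu : 0 < Qu := lt_of_lt_of_le hQb hQQ
  have h2Kα : 0 < 2 * K / α := by positivity
  have hs : 0 < Rs := by rw [hRs]; positivity
  have hs3 : Rs ^ 3 = 2 * K / α := by
    rw [hRs, ← Real.rpow_natCast _ 3, ← Real.rpow_mul h2Kα.le]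
    norm_num
  have hα' : α = 2 * K / Rs ^ 3 := by
    field_simp [hs.ne'] at hs3 ⊢; linarith
  set a := Qb / (Rs + Qb) with ha
  set b := Qu / (Rs + Qu) with hb
  have hda : 0 < Rs + Qb := by linarith
  have hdb : 0 < Rs + Qu := by linarith
  have ha0 : 0 ≤ a := by positivity
  have hab : a ≤ b := by
    rw [ha, hb, div_le_div_iff₀ hda hdb]; nlinarith
  set c := K / Rs ^ 2 - φ + α * Rs with hc
  have hc' : c = 3 * K / Rs ^ 2 - φ := by
    rw [hc, hα']; field_simp; ring
  have hcpos : 0 < c := by rw [hc]; linarith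
  constructor
  · -- m1 ≤ m3
    obtain ⟨x0, hx0, hx0e⟩ := h3.1
    have hm1 : m1 ≤ (fun x : ℝ => K / Qb ^ 2 * (x ^ 3 / (1 - x) ^ 2) - φ * x + α * (1 - x) * Qb) a :=
      h1.2 ⟨a, ⟨ha0, le_refl a⟩, rfl⟩
    have hval : (fun x : ℝ => K / Qb ^ 2 * (x ^ 3 / (1 - x) ^ 2) - φ * x + α * (1 - x) * Qb) a = c * a := by
      simp only [ha, hc]
      have h1a : 1 - Qb / (Rs + Qb) = Rs / (Rs + Qb) := by field_simp; ring
      rw [h1a]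
      field_simp
    have : c * a ≤ c * x0 := mul_le_mul_of_nonneg_left hx0.1 hcpos.le
    rw [← hx0e]
    calc m1 ≤ c * a := by rw [← hval]; exact hm1
    _ ≤ c * x0 := this
  · -- m3 ≤ m2
    have hm3 : m3 ≤ c * b := h3.2 ⟨b, ⟨hab, le_refl b⟩, rfl⟩
    obtain ⟨x, hx, hxe⟩ := h2.1
    have hbx : b ≤ x := hx.1
    have hx1 : x < 1 := hx.2
    set u := 1 - x with hu
    have hu0 : 0 < u := by simp [hu]; linarith
    have hxpos : 0 < x := lt_of_lt_of_le (by positivity) hbx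
    -- from b ≤ x : Qu * u ≤ Rs * x
    have hkey0 : Qu * u ≤ Rs * x := by
      rw [hb, div_le_iff₀ hdb] at hbx
      nlinarith
    -- AM-GM piece
    have hamgm : 3 * K * x / Rs ^ 2 ≤ K * x ^ 3 / (Qu ^ 2 * u ^ 2) + 2 * K * Qu * u / Rs ^ 3 := by
      rw [div_add_div _ _ (by positivity) (by positivity), div_le_div_iff₀ (by positivity) (by positivity)]
      nlinarith [mul_nonneg (mul_nonneg (sq_nonneg (Rs * x - Qu * u)) (by positivity : (0:ℝ) ≤ Rs * x + 2 * (Qu * u))) (by positivity : (0:ℝ) ≤ K * Rs ^ 2)]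
    have hexp : (fun x : ℝ => K / Qu ^ 2 * (x ^ 3 / (1 - x) ^ 2) - φ * x + α * (1 - x) * Qu) x - c * b
        = (K * x ^ 3 / (Qu ^ 2 * u ^ 2) + 2 * K * Qu * u / Rs ^ 3 - 3 * K * x / Rs ^ 2)
          + (3 * K / Rs ^ 2 - φ) * (x - b) := by
      simp only [hb, hc, hα', ← hu]
      field_simp
      ring
    have hfin : c * b ≤ (fun x : ℝ => K / Qu ^ 2 * (x ^ 3 / (1 - x) ^ 2) - φ * x + α * (1 - x) * Qu) x := by
      have h2nd : 0 ≤ (3 * K / Rs ^ 2 - φ) * (x - b) := by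
        apply mul_nonneg
        · linarith [hc' ▸ hcpos]
        · linarith
      nlinarith [hexp, hamgm]
    rw [← hxe]
    exact hm3.trans hfin
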